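/- Let q ∈ C⁰[0,1] with q > 0 on (0,1), f ∈ C¹[0,1] with f(0)=0, h := f′. Let cₙ → c in ℝ and let zₙ ∈ C⁰[0,1] ∩ C¹(0,1) satisfy żₙ(φ) = h(φ) − cₙ − q(φ)/zₙ(φ) and zₙ < 0 on (0,1). If the sequence {zₙ} is pointwise increasing and there exists v ∈ C⁰[0,1] with zₙ(φ) ≤ v(φ) < 0 for all n and all φ ∈ (0,1), then zₙ converges uniformly on [0,1] to a function z̄ ∈ C⁰[0,1] ∩ C¹(0,1) satisfying ż̄(φ) = h(φ) − c − q(φ)/z̄(φ) and z̄ < 0 on (0,1). The same conclusion holds if {zₙ} is pointwise decreasing and there exists w ∈ C⁰[0,1] with zₙ(φ) ≥ w(φ) for all n and all φ ∈ (0,1). -/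

import Mathlib

open Set Filter Topology MeasureTheory

noncomputable section

/-- `z` is a solution of the singular first-order ODE ż(φ) = h(φ) − c − q(φ)/z(φ)
on (0,1), negative on (0,1), and continuous on [0,1]. -/
def SolODE (h q : ℝ → ℝ) (c : ℝ) (z : ℝ → ℝ) : Prop :=
  ContinuousOn z (Icc 0 1) ∧
  (∀ φ ∈ Ioo (0:ℝ) 1, HasDerivAt z (h φ - c - q φ / z φ) φ) ∧
  (∀ φ ∈ Ioo (0:ℝ) 1, z φ < 0)


lemma polya {G : ℕ → ℝ → ℝ} {Gb : ℝ → ℝ}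
    (hmono : ∀ n, MonotoneOn (G n) (Icc (0:ℝ) 1))
    (hGb : ContinuousOn Gb (Icc 0 1))
    (hpt : ∀ x ∈ Icc (0:ℝ) 1, Tendsto (fun n => G n x) atTop (𝓝 (Gb x))) :
    TendstoUniformlyOn G Gb atTop (Icc 0 1) := by
  rw [Metric.tendstoUniformlyOn_iff]
  intro ε hε
  obtain ⟨δ, hδ, hd⟩ := (Metric.uniformContinuousOn_iff).mp
    (isCompact_Icc.uniformContinuousOn_of_continuous hGb) (ε/4) (by positivity)
  obtain ⟨N, hN⟩ := exists_nat_gt (1/δ)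
  set M : ℕ := N + 1 with hM
  have hMpos : (0:ℝ) < M := by positivity
  have hMδ : 1 / (M:ℝ) < δ := by
    rw [div_lt_iff₀ hMpos]
    calc (1:ℝ) = δ * (1/δ) := by field_simp
    _ < δ * M := by
      apply mul_lt_mul_of_pos_left _ hδ
      calc (1/δ:ℝ) < N := hN
      _ ≤ M := by exact_mod_cast Nat.le_succ N
  -- partition points
  have hpart : ∀ i ∈ Finset.range (M+1), ∀ᶠ n in atTop,
      dist (G n ((i:ℝ)/M)) (Gb ((i:ℝ)/M)) < ε/4 := by
    intro i hi
    have hmem : ((i:ℝ)/M) ∈ Icc (0:ℝ) 1 := by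
      constructor
      · positivity
      · rw [div_le_one hMpos]
        exact_mod_cast Nat.lt_succ_iff.mp (Finset.mem_range.mp hi)
    have := hpt _ hmem
    exact (Metric.tendsto_nhds.mp this) (ε/4) (by positivity)
  have hall : ∀ᶠ n in atTop, ∀ i ∈ Finset.range (M+1),
      dist (G n ((i:ℝ)/M)) (Gb ((i:ℝ)/M)) < ε/4 :=
    (Filter.eventually_all_finset _).mpr hpart
  filter_upwards [hall] with n hn x hx
  obtain ⟨hx0, hx1⟩ := hx
  set j : ℕ := min ⌊x * M⌋₊ (M - 1) with hj
  have hjM : j + 1 ≤ M := by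
    have : j ≤ M - 1 := min_le_right _ _
    omega
  have hja : (j:ℝ) ≤ x * M := by
    calc (j:ℝ) ≤ (⌊x * M⌋₊ : ℝ) := by exact_mod_cast min_le_left _ _
    _ ≤ x * M := Nat.floor_le (by positivity)
  have hjb : x * M ≤ (j:ℝ) + 1 := by
    rcases le_or_gt ⌊x * M⌋₊ (M-1) with h | h
    · have hjf : j = ⌊x * M⌋₊ := min_eq_left h
      rw [hjf]
      exact le_of_lt (Nat.lt_floor_add_one _)
    · have hjf : j = M - 1 := min_eq_right (le_of_lt h)
      have : (j:ℝ) + 1 = M := by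
        rw [hjf]; have : 1 ≤ M := Nat.le_add_left 1 N
        push_cast [Nat.cast_sub this]; ring
      rw [this]
      calc x * M ≤ 1 * M := by nlinarith
      _ = M := one_mul _
  set a : ℝ := (j:ℝ)/M with ha
  set b : ℝ := ((j:ℝ)+1)/M with hb
  have hax : a ≤ x := by rw [ha, div_le_iff₀ hMpos]; linarith
  have hxb : x ≤ b := by rw [hb, le_div_iff₀ hMpos]; linarith
  have hamem : a ∈ Icc (0:ℝ) 1 := ⟨by positivity, le_trans hax hx1⟩
  have hbmem : b ∈ Icc (0:ℝ) 1 := by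
    constructor
    · positivity
    · rw [hb, div_le_one hMpos]; exact_mod_cast hjM
  have hba : b - a = 1/M := by rw [hb, ha]; field_simp; ring
  have hdista : dist a x < δ := by
    rw [Real.dist_eq, abs_of_nonpos (by linarith)]
    calc -(a - x) ≤ b - a := by linarith
    _ = 1/M := hba
    _ < δ := hMδ
  have hdistb : dist b x < δ := by
    rw [Real.dist_eq, abs_of_nonneg (by linarith)]
    calc b - x ≤ b - a := by linarith
    _ = 1/M := hba
    _ < δ := hMδ
  have hGa := hn j (Finset.mem_range.mpr (by omega))
  have hGb' := hn (j+1) (Finset.mem_range.mpr (by omega))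
  have hGbx_a : dist (Gb a) (Gb x) < ε/4 := hd a hamem x ⟨hx0, hx1⟩ hdista
  have hGbx_b : dist (Gb b) (Gb x) < ε/4 := hd b hbmem x ⟨hx0, hx1⟩ hdistb
  have h1 : G n x ≤ G n b := hmono n ⟨hx0, hx1⟩ hbmem hxb
  have h2 : G n a ≤ G n x := hmono n hamem ⟨hx0, hx1⟩ hax
  rw [show ((j+1:ℕ):ℝ)/(M:ℝ) = b by rw [hb]; push_cast; ring] at hGb'
  rw [Real.dist_eq] at hGa hGb' hGbx_a hGbx_b ⊢
  rw [abs_lt] at hGa hGb' hGbx_a hGbx_b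
  rw [abs_lt]
  constructor <;> nlinarith

lemma solG_deriv {f h q z : ℝ → ℝ} {c : ℝ}
    (hf' : ∀ x ∈ Icc (0:ℝ) 1, HasDerivWithinAt f (h x) (Icc 0 1) x)
    (hz : SolODE h q c z) {φ : ℝ} (hφ : φ ∈ Ioo (0:ℝ) 1) :
    HasDerivAt (fun t => z t - f t + c * t) (-(q φ / z φ)) φ := by
  have hf : HasDerivAt f (h φ) φ :=
    (hf' φ (Ioo_subset_Icc_self hφ)).hasDerivAt (Icc_mem_nhds hφ.1 hφ.2)
  have hzd := hz.2.1 φ hφ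
  have := (hzd.sub hf).add ((hasDerivAt_id φ).const_mul c)
  rw [show -(q φ / z φ) = h φ - c - q φ / z φ - h φ + c * 1 by ring]
  exact this

lemma contG {f h q z : ℝ → ℝ} {c : ℝ}
    (hf' : ∀ x ∈ Icc (0:ℝ) 1, HasDerivWithinAt f (h x) (Icc 0 1) x)
    (hz : SolODE h q c z) :
    ContinuousOn (fun t => z t - f t + c * t) (Icc (0:ℝ) 1) := by
  have hfc : ContinuousOn f (Icc (0:ℝ) 1) := fun x hx => (hf' x hx).continuousWithinAt
  exact (hz.1.sub hfc).add (continuous_const.mul continuous_id).continuousOn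

lemma solG_mono {f h q z : ℝ → ℝ} {c : ℝ}
    (hq_pos : ∀ φ ∈ Ioo (0:ℝ) 1, 0 < q φ)
    (hf' : ∀ x ∈ Icc (0:ℝ) 1, HasDerivWithinAt f (h x) (Icc 0 1) x)
    (hz : SolODE h q c z) :
    MonotoneOn (fun t => z t - f t + c * t) (Icc (0:ℝ) 1) := by
  apply monotoneOn_of_deriv_nonneg (convex_Icc 0 1) (contG hf' hz)
  · rw [interior_Icc]
    exact fun x hx => (solG_deriv hf' hz hx).differentiableAt.differentiableWithinAt
  · rw [interior_Icc]
    intro x hx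
    rw [(solG_deriv hf' hz hx).deriv]
    have : q x / z x ≤ 0 :=
      div_nonpos_of_nonneg_of_nonpos (hq_pos x hx).le (hz.2.2 x hx).le
    linarith

lemma diffG_mono {f h q z1 z2 : ℝ → ℝ} {c1 c2 : ℝ}
    (hq_pos : ∀ φ ∈ Ioo (0:ℝ) 1, 0 < q φ)
    (hf' : ∀ x ∈ Icc (0:ℝ) 1, HasDerivWithinAt f (h x) (Icc 0 1) x)
    (hz1 : SolODE h q c1 z1) (hz2 : SolODE h q c2 z2)
    (hle : ∀ φ ∈ Ioo (0:ℝ) 1, z1 φ ≤ z2 φ) :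
    MonotoneOn (fun t => (z2 t - f t + c2 * t) - (z1 t - f t + c1 * t)) (Icc (0:ℝ) 1) := by
  apply monotoneOn_of_deriv_nonneg (convex_Icc 0 1) ((contG hf' hz2).sub (contG hf' hz1))
  · rw [interior_Icc]
    exact fun x hx => ((solG_deriv hf' hz2 hx).sub
      (solG_deriv hf' hz1 hx)).differentiableAt.differentiableWithinAt
  · rw [interior_Icc]
    intro x hx
    rw [((solG_deriv hf' hz2 hx).sub (solG_deriv hf' hz1 hx)).deriv]
    have h2 : z2 x < 0 := hz2.2.2 x hx
    have h1 : 1 / z2 x ≤ 1 / z1 x := one_div_le_one_div_of_neg_of_le h2 (hle x hx)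
    have := mul_le_mul_of_nonneg_left h1 (hq_pos x hx).le
    rw [← div_eq_mul_one_div, ← div_eq_mul_one_div] at this
    linarith

lemma lipG {f h q z : ℝ → ℝ} {c a b K : ℝ}
    (hq_pos : ∀ φ ∈ Ioo (0:ℝ) 1, 0 < q φ)
    (hf' : ∀ x ∈ Icc (0:ℝ) 1, HasDerivWithinAt f (h x) (Icc 0 1) x)
    (hz : SolODE h q c z)
    (hab : Icc a b ⊆ Ioo (0:ℝ) 1)
    (hbound : ∀ t ∈ Icc a b, q t / (-(z t)) ≤ K) :
    ∀ ψ ∈ Icc a b, ∀ φ ∈ Icc a b, ψ ≤ φ →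
      (z φ - f φ + c * φ) - (z ψ - f ψ + c * ψ) ≤ K * (φ - ψ) := by
  have hmono : MonotoneOn (fun t => K * t - (z t - f t + c * t)) (Icc a b) := by
    apply monotoneOn_of_deriv_nonneg (convex_Icc a b)
    · exact ((continuous_const.mul continuous_id).continuousOn).sub
        ((contG hf' hz).mono (hab.trans Ioo_subset_Icc_self))
    · rw [interior_Icc]
      intro x hx
      exact (((hasDerivAt_id x).const_mul K).sub
        (solG_deriv hf' hz (hab (Ioo_subset_Icc_self hx)))).differentiableAt.differentiableWithinAt
    · rw [interior_Icc]
      intro x hx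
      have hx' := hab (Ioo_subset_Icc_self hx)
      have hd : HasDerivAt (fun t => K * t - (z t - f t + c * t)) (K * 1 - -(q x / z x)) x :=
        ((hasDerivAt_id x).const_mul K).sub (solG_deriv hf' hz hx')
      rw [hd.deriv]
      have hzneg : z x < 0 := hz.2.2 x hx'
      have hb := hbound x (Ioo_subset_Icc_self hx)
      have : -(q x / z x) = q x / (-(z x)) := (div_neg (q x)).symm
      nlinarith [this]
  intro ψ hψ φ hφ hle
  have := hmono hψ hφ hle
  simp only at this
  linarith

lemma core {f h q : ℝ → ℝ} {c : ℝ} {cn : ℕ → ℝ} {zn : ℕ → ℝ → ℝ} {zbar : ℝ → ℝ}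
    (hq_cont : ContinuousOn q (Icc 0 1))
    (hq_pos : ∀ φ ∈ Ioo (0:ℝ) 1, 0 < q φ)
    (hf' : ∀ x ∈ Icc (0:ℝ) 1, HasDerivWithinAt f (h x) (Icc 0 1) x)
    (hcn : Tendsto cn atTop (𝓝 c))
    (hzn : ∀ n, SolODE h q (cn n) (zn n))
    (hpt : ∀ x ∈ Icc (0:ℝ) 1, Tendsto (fun n => zn n x) atTop (𝓝 (zbar x)))
    (hcont : ContinuousOn zbar (Icc 0 1))
    (hneg : ∀ φ ∈ Ioo (0:ℝ) 1, zbar φ < 0) :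
    SolODE h q c zbar ∧ TendstoUniformlyOn zn zbar atTop (Icc 0 1) := by
  have hfc : ContinuousOn f (Icc (0:ℝ) 1) := fun x hx => (hf' x hx).continuousWithinAt
  set G : ℕ → ℝ → ℝ := fun n t => zn n t - f t + cn n * t with hG
  set Gbar : ℝ → ℝ := fun t => zbar t - f t + c * t with hGbar
  have hGmono : ∀ n, MonotoneOn (G n) (Icc (0:ℝ) 1) := fun n => solG_mono hq_pos hf' (hzn n)
  have hGbcont : ContinuousOn Gbar (Icc (0:ℝ) 1) :=
    (hcont.sub hfc).add (continuous_const.mul continuous_id).continuousOn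
  have hGpt : ∀ x ∈ Icc (0:ℝ) 1, Tendsto (fun n => G n x) atTop (𝓝 (Gbar x)) := by
    intro x hx
    exact ((hpt x hx).sub tendsto_const_nhds).add (hcn.mul_const x)
  have hGunif : TendstoUniformlyOn G Gbar atTop (Icc 0 1) := polya hGmono hGbcont hGpt
  -- uniform convergence of zn
  have hunif : TendstoUniformlyOn zn zbar atTop (Icc 0 1) := by
    rw [Metric.tendstoUniformlyOn_iff]
    intro ε hε
    have h1 := (Metric.tendstoUniformlyOn_iff.mp hGunif) (ε/2) (by positivity)
    have h2 : ∀ᶠ n in atTop, |cn n - c| < ε/2 := by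
      have := Metric.tendsto_nhds.mp hcn (ε/2) (by positivity)
      simpa [Real.dist_eq] using this
    filter_upwards [h1, h2] with n hn hc' x hx
    have hGx := hn x hx
    rw [Real.dist_eq] at hGx ⊢
    have hxe : zbar x - zn n x = (Gbar x - G n x) - (c - cn n) * x := by
      simp only [hG, hGbar]; ring
    rw [hxe]
    have hx1 : |x| ≤ 1 := by
      rw [abs_le]; exact ⟨by linarith [hx.1], hx.2⟩
    calc |(Gbar x - G n x) - (c - cn n) * x| ≤ |Gbar x - G n x| + |(c - cn n) * x| :=
          abs_sub _ _
    _ ≤ |Gbar x - G n x| + |c - cn n| * 1 := by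
        rw [abs_mul]
        have : |c - cn n| * |x| ≤ |c - cn n| * 1 :=
          mul_le_mul_of_nonneg_left hx1 (abs_nonneg _)
        linarith
    _ < ε := by
        rw [abs_sub_comm (cn n) c] at hc'
        linarith
  refine ⟨⟨hcont, ?_, hneg⟩, hunif⟩
  -- derivative
  intro φ0 hφ0
  obtain ⟨hφ0a, hφ0b⟩ := hφ0
  set a : ℝ := φ0/2 with hadef
  set b : ℝ := (φ0+1)/2 with hbdef
  have hab : a < b := by rw [hadef, hbdef]; linarith
  have haφ : a < φ0 := by rw [hadef]; linarith
  have hφb : φ0 < b := by rw [hbdef]; linarith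
  have ha0 : 0 < a := by rw [hadef]; linarith
  have hb1 : b < 1 := by rw [hbdef]; linarith
  have hKsub : Icc a b ⊆ Ioo (0:ℝ) 1 := fun t ht => ⟨lt_of_lt_of_le ha0 ht.1, lt_of_le_of_lt ht.2 hb1⟩
  have hKsub' : Icc a b ⊆ Icc (0:ℝ) 1 := hKsub.trans Ioo_subset_Icc_self
  -- max of zbar on K is negative
  obtain ⟨x0, hx0K, hx0max⟩ := isCompact_Icc.exists_isMaxOn (nonempty_Icc.mpr hab.le)
    (hcont.mono hKsub')
  set δ : ℝ := -(zbar x0) with hδdef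
  have hδpos : 0 < δ := by
    have := hneg x0 (hKsub hx0K)
    rw [hδdef]; linarith
  have hzbK : ∀ t ∈ Icc a b, zbar t ≤ -δ := by
    intro t ht
    have := hx0max ht
    simp only [hδdef]
    simpa using this
  obtain ⟨Q, hQ⟩ := isCompact_Icc.exists_bound_of_continuousOn (hq_cont.mono hKsub')
  have hQ0 : 0 ≤ Q := le_trans (norm_nonneg _) (hQ a (left_mem_Icc.mpr hab.le))
  -- uniform convergence of derivatives on Ioo a b
  have hderivunif : TendstoUniformlyOn (fun n t => h t - cn n - q t / zn n t)
      (fun t => h t - c - q t / zbar t) atTop (Ioo a b) := by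
    rw [Metric.tendstoUniformlyOn_iff]
    intro ε hε
    set η : ℝ := min (δ/2) (ε * δ^2 / (8 * (Q+1))) with hη
    have hηpos : 0 < η := by
      apply lt_min (by positivity) (by positivity)
    have h1 := (Metric.tendstoUniformlyOn_iff.mp hunif) η hηpos
    have h2 : ∀ᶠ n in atTop, |cn n - c| < ε/2 := by
      have := Metric.tendsto_nhds.mp hcn (ε/2) (by positivity)
      simpa [Real.dist_eq] using this
    filter_upwards [h1, h2] with n hn hc' t ht
    have htK : t ∈ Icc a b := Ioo_subset_Icc_self ht
    have htI : t ∈ Icc (0:ℝ) 1 := hKsub' htK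
    have hzt := hn t htI
    rw [Real.dist_eq] at hzt ⊢
    have hvb : zbar t ≤ -δ := hzbK t htK
    have hub : zn n t ≤ -(δ/2) := by
      have : |zbar t - zn n t| < η := hzt
      have h3 : η ≤ δ/2 := min_le_left _ _
      rw [abs_lt] at this
      linarith
    have hu0 : zn n t ≠ 0 := by intro hcon; rw [hcon] at hub; linarith
    have hv0 : zbar t ≠ 0 := by intro hcon; rw [hcon] at hvb; linarith
    have hqt : |q t| ≤ Q := hQ t htK
    -- bound the quotient difference
    have hquot : |q t / zn n t - q t / zbar t| ≤ ε/2 := by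
      have heq : q t / zn n t - q t / zbar t = q t * (zbar t - zn n t) / (zn n t * zbar t) := by
        field_simp
      rw [heq, abs_div, abs_mul]
      have hden : δ^2/2 ≤ |zn n t * zbar t| := by
        have hprod : δ/2 * δ ≤ zn n t * zbar t := by nlinarith
        rw [abs_of_pos (by nlinarith)]
        nlinarith
      have hnum : |q t| * |zbar t - zn n t| ≤ Q * η := by
        apply mul_le_mul hqt (le_of_lt hzt) (abs_nonneg _) hQ0
      calc |q t| * |zbar t - zn n t| / |zn n t * zbar t| ≤ Q * η / (δ^2/2) := by
            apply div_le_div₀ (by positivity) hnum (by positivity) hden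
      _ ≤ ε/2 := by
          have hη2 : η ≤ ε * δ^2 / (8 * (Q+1)) := min_le_right _ _
          have hQη : Q * η ≤ Q * (ε * δ^2 / (8 * (Q+1))) :=
            mul_le_mul_of_nonneg_left hη2 hQ0
          have h8 : Q * (ε * δ^2 / (8 * (Q+1))) ≤ ε * δ^2 / 4 := by
            rw [← mul_div_assoc, div_le_div_iff₀ (by positivity) (by positivity)]
            nlinarith [mul_nonneg hε.le (sq_nonneg δ)]
          rw [div_le_iff₀ (by positivity)]
          have hr : ε/2 * (δ^2/2) = ε * δ^2/4 := by ring
          linarith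
    have heq2 : (h t - c - q t / zbar t) - (h t - cn n - q t / zn n t)
        = (cn n - c) - (q t / zbar t - q t / zn n t) := by ring
    rw [heq2]
    calc |(cn n - c) - (q t / zbar t - q t / zn n t)|
        ≤ |cn n - c| + |q t / zbar t - q t / zn n t| := abs_sub _ _
    _ < ε/2 + ε/2 := by
        rw [abs_sub_comm (q t / zbar t)]
        exact add_lt_add_of_lt_of_le hc' hquot
    _ = ε := by ring
  have hmem : φ0 ∈ Ioo a b := ⟨haφ, hφb⟩
  have := hasDerivAt_of_tendstoUniformlyOn isOpen_Ioo hderivunif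
    (Eventually.of_forall (fun n x hx => (hzn n).2.1 x (hKsub (Ioo_subset_Icc_self hx))))
    (fun x hx => hpt x (hKsub' (Ioo_subset_Icc_self hx))) hmem
  exact this

lemma le_on_Icc {z v : ℝ → ℝ} (hz : ContinuousOn z (Icc 0 1))
    (hv : ContinuousOn v (Icc 0 1))
    (h : ∀ φ ∈ Ioo (0:ℝ) 1, z φ ≤ v φ) : ∀ φ ∈ Icc (0:ℝ) 1, z φ ≤ v φ := by
  intro φ hφ
  have hne : (𝓝[Ioo (0:ℝ) 1] φ).NeBot := by
    rw [← mem_closure_iff_nhdsWithin_neBot, closure_Ioo (by norm_num : (0:ℝ) ≠ 1)]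
    exact hφ
  have hz' : Tendsto z (𝓝[Ioo (0:ℝ) 1] φ) (𝓝 (z φ)) :=
    (hz φ hφ).mono_left (nhdsWithin_mono φ Ioo_subset_Icc_self)
  have hv' : Tendsto v (𝓝[Ioo (0:ℝ) 1] φ) (𝓝 (v φ)) :=
    (hv φ hφ).mono_left (nhdsWithin_mono φ Ioo_subset_Icc_self)
  refine le_of_tendsto_of_tendsto hz' hv' ?_
  filter_upwards [self_mem_nhdsWithin] with x hx
  exact h x hx

lemma cwa_of_G {f zbar : ℝ → ℝ} {c x : ℝ} (hx : x ∈ Icc (0:ℝ) 1)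
    (hfc : ContinuousWithinAt f (Icc 0 1) x)
    (hG : ∀ ε > 0, ∃ δ > 0, ∀ y ∈ Icc (0:ℝ) 1, |y - x| < δ →
      |(zbar y - f y + c*y) - (zbar x - f x + c*x)| < ε) :
    ContinuousWithinAt zbar (Icc 0 1) x := by
  rw [Metric.continuousWithinAt_iff] at hfc ⊢
  intro ε hε
  obtain ⟨δ1, hδ1, h1⟩ := hfc (ε/3) (by positivity)
  obtain ⟨δ2, hδ2, h2⟩ := hG (ε/3) (by positivity)
  refine ⟨min (min δ1 δ2) (ε/(3*(|c|+1))), lt_min (lt_min hδ1 hδ2) (by positivity), ?_⟩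
  intro y hy hyd
  have hyd1 : dist y x < δ1 := lt_of_lt_of_le hyd ((min_le_left _ _).trans (min_le_left _ _))
  have hyd2 : |y - x| < δ2 := by
    rw [← Real.dist_eq]
    exact lt_of_lt_of_le hyd ((min_le_left _ _).trans (min_le_right _ _))
  have hyd3 : |y - x| < ε/(3*(|c|+1)) := by
    rw [← Real.dist_eq]
    exact lt_of_lt_of_le hyd (min_le_right _ _)
  have e1 := h1 hy hyd1
  have e2 := h2 y hy hyd2
  rw [Real.dist_eq] at e1 ⊢
  have key : zbar y - zbar x =
      ((zbar y - f y + c*y) - (zbar x - f x + c*x)) + (f y - f x) - c*(y-x) := by ring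
  have hcb : |c| * |y - x| ≤ ε/3 := by
    rcases eq_or_lt_of_le (abs_nonneg c) with hc0 | hc0
    · rw [← hc0, zero_mul]; positivity
    · calc |c| * |y - x| ≤ |c| * (ε/(3*(|c|+1))) :=
          mul_le_mul_of_nonneg_left hyd3.le (abs_nonneg c)
      _ ≤ ε/3 := by
          rw [mul_div_assoc']
          rw [div_le_div_iff₀ (by positivity) (by positivity)]
          nlinarith [abs_nonneg c]
  calc |zbar y - zbar x| ≤
      |(zbar y - f y + c*y) - (zbar x - f x + c*x)| + |f y - f x| + |c| * |y - x| := by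
        rw [key]
        calc |((zbar y - f y + c*y) - (zbar x - f x + c*x)) + (f y - f x) - c*(y-x)|
            ≤ |((zbar y - f y + c*y) - (zbar x - f x + c*x)) + (f y - f x)| + |c*(y-x)| :=
              abs_sub _ _
        _ ≤ |(zbar y - f y + c*y) - (zbar x - f x + c*x)| + |f y - f x| + |c*(y-x)| := by
              linarith [abs_add_le ((zbar y - f y + c*y) - (zbar x - f x + c*x)) (f y - f x)]
        _ = |(zbar y - f y + c*y) - (zbar x - f x + c*x)| + |f y - f x| + |c| * |y-x| := by
              rw [abs_mul]
  _ < ε := by linarith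

lemma cwa_interior {f h q u zbar : ℝ → ℝ} {c : ℝ} {cn : ℕ → ℝ} {zn : ℕ → ℝ → ℝ}
    (hq_cont : ContinuousOn q (Icc 0 1))
    (hq_pos : ∀ φ ∈ Ioo (0:ℝ) 1, 0 < q φ)
    (hf' : ∀ x ∈ Icc (0:ℝ) 1, HasDerivWithinAt f (h x) (Icc 0 1) x)
    (hzn : ∀ n, SolODE h q (cn n) (zn n))
    (hu : ContinuousOn u (Icc 0 1)) (huneg : ∀ φ ∈ Ioo (0:ℝ) 1, u φ < 0)
    (hub : ∀ n, ∀ φ ∈ Ioo (0:ℝ) 1, zn n φ ≤ u φ)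
    (hpt : ∀ x ∈ Icc (0:ℝ) 1, Tendsto (fun n => zn n x) atTop (𝓝 (zbar x)))
    (hcn : Tendsto cn atTop (𝓝 c))
    {x : ℝ} (hx : x ∈ Ioo (0:ℝ) 1) :
    ContinuousWithinAt zbar (Icc 0 1) x := by
  obtain ⟨hxa, hxb⟩ := hx
  set a : ℝ := x/2 with hadef
  set b : ℝ := (x+1)/2 with hbdef
  have hab : a < b := by rw [hadef, hbdef]; linarith
  have hax : a < x := by rw [hadef]; linarith
  have hxb' : x < b := by rw [hbdef]; linarith
  have ha0 : 0 < a := by rw [hadef]; linarith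
  have hb1 : b < 1 := by rw [hbdef]; linarith
  have hKsub : Icc a b ⊆ Ioo (0:ℝ) 1 :=
    fun t ht => ⟨lt_of_lt_of_le ha0 ht.1, lt_of_le_of_lt ht.2 hb1⟩
  have hKsub' : Icc a b ⊆ Icc (0:ℝ) 1 := hKsub.trans Ioo_subset_Icc_self
  obtain ⟨x0, hx0K, hx0max⟩ := isCompact_Icc.exists_isMaxOn (nonempty_Icc.mpr hab.le)
    (hu.mono hKsub')
  set δv : ℝ := -(u x0) with hδdef
  have hδpos : 0 < δv := by
    have := huneg x0 (hKsub hx0K); rw [hδdef]; linarith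
  have huK : ∀ t ∈ Icc a b, u t ≤ -δv := by
    intro t ht
    have := hx0max ht
    simp only [hδdef]
    simpa using this
  obtain ⟨Q, hQ⟩ := isCompact_Icc.exists_bound_of_continuousOn (hq_cont.mono hKsub')
  have hQ0 : 0 ≤ Q := le_trans (norm_nonneg _) (hQ a (left_mem_Icc.mpr hab.le))
  set K : ℝ := Q / δv with hKdef
  have hK0 : 0 ≤ K := by positivity
  -- Lipschitz increments for each n
  have hlip : ∀ n, ∀ ψ ∈ Icc a b, ∀ φ ∈ Icc a b, ψ ≤ φ →
      (zn n φ - f φ + cn n * φ) - (zn n ψ - f ψ + cn n * ψ) ≤ K * (φ - ψ) := by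
    intro n
    apply lipG hq_pos hf' (hzn n) hKsub
    intro t ht
    have htIoo := hKsub ht
    have hzt : zn n t ≤ -δv := le_trans (hub n t htIoo) (huK t ht)
    have hqt : q t ≤ Q := le_trans (le_abs_self _) (hQ t ht)
    exact div_le_div₀ hQ0 hqt hδpos (by linarith)
  -- increments nonneg for each n
  have hmn : ∀ n, MonotoneOn (fun t => zn n t - f t + cn n * t) (Icc (0:ℝ) 1) :=
    fun n => solG_mono hq_pos hf' (hzn n)
  -- pass to limit
  have hGpt : ∀ y ∈ Icc (0:ℝ) 1,
      Tendsto (fun n => zn n y - f y + cn n * y) atTop (𝓝 (zbar y - f y + c * y)) :=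
    fun y hy => ((hpt y hy).sub tendsto_const_nhds).add (hcn.mul_const y)
  have hinc : ∀ ψ ∈ Icc a b, ∀ φ ∈ Icc a b, ψ ≤ φ →
      0 ≤ (zbar φ - f φ + c * φ) - (zbar ψ - f ψ + c * ψ) ∧
      (zbar φ - f φ + c * φ) - (zbar ψ - f ψ + c * ψ) ≤ K * (φ - ψ) := by
    intro ψ hψ φ hφ hle
    have ht : Tendsto (fun n => (zn n φ - f φ + cn n * φ) - (zn n ψ - f ψ + cn n * ψ)) atTop
        (𝓝 ((zbar φ - f φ + c * φ) - (zbar ψ - f ψ + c * ψ))) :=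
      (hGpt φ (hKsub' hφ)).sub (hGpt ψ (hKsub' hψ))
    constructor
    · exact ge_of_tendsto ht (Eventually.of_forall fun n => by
        have := hmn n (hKsub' hψ) (hKsub' hφ) hle
        simp only at this
        linarith)
    · exact le_of_tendsto ht (Eventually.of_forall fun n => hlip n ψ hψ φ hφ hle)
  apply cwa_of_G (hKsub' ⟨hax.le, hxb'.le⟩) ((hf' x (hKsub' ⟨hax.le, hxb'.le⟩)).continuousWithinAt)
  intro ε hε
  refine ⟨min (min (x - a) (b - x)) (ε/(K+1)), by
    apply lt_min (lt_min (by linarith) (by linarith)); positivity, ?_⟩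
  intro y hy hyd
  have hy1 : |y - x| < x - a := lt_of_lt_of_le hyd ((min_le_left _ _).trans (min_le_left _ _))
  have hy2 : |y - x| < b - x := lt_of_lt_of_le hyd ((min_le_left _ _).trans (min_le_right _ _))
  have hy3 : |y - x| < ε/(K+1) := lt_of_lt_of_le hyd (min_le_right _ _)
  rw [abs_lt] at hy1 hy2
  have hyK : y ∈ Icc a b := ⟨by linarith, by linarith⟩
  have hxK : x ∈ Icc a b := ⟨hax.le, hxb'.le⟩
  have hbound : |(zbar y - f y + c*y) - (zbar x - f x + c*x)| ≤ K * |y - x| := by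
    rcases le_total y x with hyx | hxy
    · obtain ⟨hp, hb'⟩ := hinc y hyK x hxK hyx
      rw [abs_of_nonpos (by linarith), abs_of_nonpos (by linarith)]
      linarith
    · obtain ⟨hp, hb'⟩ := hinc x hxK y hyK hxy
      rw [abs_of_nonneg (by linarith), abs_of_nonneg (by linarith)]
      linarith
  calc |(zbar y - f y + c*y) - (zbar x - f x + c*x)| ≤ K * |y - x| := hbound
  _ ≤ K * (ε/(K+1)) := mul_le_mul_of_nonneg_left hy3.le hK0
  _ < ε := by
      rw [mul_div_assoc', div_lt_iff₀ (by positivity)]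
      nlinarith

/-- monotone sequences of solutions with the stated bounds converge
uniformly on [0,1] to a solution with parameter c. -/
theorem stmt_4 (f h q : ℝ → ℝ) (c : ℝ) (cn : ℕ → ℝ) (zn : ℕ → ℝ → ℝ)
    (hq_cont : ContinuousOn q (Icc 0 1))
    (hq_pos : ∀ φ ∈ Ioo (0:ℝ) 1, 0 < q φ)
    (hf0 : f 0 = 0)
    (hf' : ∀ x ∈ Icc (0:ℝ) 1, HasDerivWithinAt f (h x) (Icc 0 1) x)
    (hh_cont : ContinuousOn h (Icc 0 1))
    (hcn : Tendsto cn atTop (𝓝 c))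
    (hzn : ∀ n, SolODE h q (cn n) (zn n))
    (hmono :
      ((∀ φ, Monotone fun n => zn n φ) ∧
        ∃ v : ℝ → ℝ, ContinuousOn v (Icc 0 1) ∧
          ∀ n, ∀ φ ∈ Ioo (0:ℝ) 1, zn n φ ≤ v φ ∧ v φ < 0) ∨
      ((∀ φ, Antitone fun n => zn n φ) ∧
        ∃ w : ℝ → ℝ, ContinuousOn w (Icc 0 1) ∧
          ∀ n, ∀ φ ∈ Ioo (0:ℝ) 1, w φ ≤ zn n φ)) :
    ∃ zbar : ℝ → ℝ, SolODE h q c zbar ∧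
      TendstoUniformlyOn zn zbar atTop (Icc 0 1) := by
  have hfc : ContinuousOn f (Icc (0:ℝ) 1) := fun x hx => (hf' x hx).continuousWithinAt
  have h0I : (0:ℝ) ∈ Icc (0:ℝ) 1 := ⟨le_refl _, by norm_num⟩
  have h1I : (1:ℝ) ∈ Icc (0:ℝ) 1 := ⟨by norm_num, le_refl _⟩
  have hhalfI : (1/2:ℝ) ∈ Icc (0:ℝ) 1 := by norm_num
  rcases hmono with ⟨hm, v, hvcont, hv⟩ | ⟨hm, w, hwcont, hw⟩
  · -- INCREASING CASE
    have hvI : ∀ n, ∀ φ ∈ Icc (0:ℝ) 1, zn n φ ≤ v φ :=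
      fun n => le_on_Icc (hzn n).1 hvcont (fun φ hφ => (hv n φ hφ).1)
    have hbdd : ∀ φ ∈ Icc (0:ℝ) 1, BddAbove (range fun n => zn n φ) := by
      intro φ hφ
      exact ⟨v φ, by rintro _ ⟨n, rfl⟩; exact hvI n φ hφ⟩
    set zbar : ℝ → ℝ := fun φ => ⨆ n, zn n φ with hzbardef
    have hpt : ∀ x ∈ Icc (0:ℝ) 1, Tendsto (fun n => zn n x) atTop (𝓝 (zbar x)) :=
      fun x hx => tendsto_atTop_ciSup (hm x) (hbdd x hx)
    have hneg : ∀ φ ∈ Ioo (0:ℝ) 1, zbar φ < 0 := by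
      intro φ hφ
      have : zbar φ ≤ v φ := ciSup_le (fun n => (hv n φ hφ).1)
      exact lt_of_le_of_lt this (hv 0 φ hφ).2
    have hGpt : ∀ y ∈ Icc (0:ℝ) 1,
        Tendsto (fun n => zn n y - f y + cn n * y) atTop (𝓝 (zbar y - f y + c * y)) :=
      fun y hy => ((hpt y hy).sub tendsto_const_nhds).add (hcn.mul_const y)
    have hmn : ∀ n, MonotoneOn (fun t => zn n t - f t + cn n * t) (Icc (0:ℝ) 1) :=
      fun n => solG_mono hq_pos hf' (hzn n)
    have hGbmono : ∀ ψ ∈ Icc (0:ℝ) 1, ∀ φ ∈ Icc (0:ℝ) 1, ψ ≤ φ →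
        (zbar ψ - f ψ + c * ψ) ≤ (zbar φ - f φ + c * φ) := by
      intro ψ hψ φ hφ hle
      refine le_of_tendsto_of_tendsto (hGpt ψ hψ) (hGpt φ hφ)
        (Eventually.of_forall fun n => ?_)
      have := hmn n hψ hφ hle
      simpa using this
    have hGincr : ∀ n m : ℕ, n ≤ m → ∀ ψ ∈ Icc (0:ℝ) 1, ∀ φ ∈ Icc (0:ℝ) 1, ψ ≤ φ →
        (zn n φ - f φ + cn n * φ) - (zn n ψ - f ψ + cn n * ψ) ≤
        (zn m φ - f φ + cn m * φ) - (zn m ψ - f ψ + cn m * ψ) := by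
      intro n m hnm ψ hψ φ hφ hle
      have hmono2 := diffG_mono hq_pos hf' (hzn n) (hzn m) (fun t _ => hm t hnm) hψ hφ hle
      simp only at hmono2
      linarith
    -- the "no jump at 0" (hump) argument
    have hump : ∀ ε > 0, ∃ ψ, (0:ℝ) < ψ ∧ ψ ≤ 1/2 ∧
        (zbar ψ - f ψ + c * ψ) - (zbar 0 - f 0 + c * 0) < ε := by
      intro ε hε
      by_contra hcon
      push_neg at hcon
      obtain ⟨C, hC⟩ := hcn.bddAbove_range
      set B : ℝ := v 1 - zn 0 0 - f 1 + f 0 + C with hBdef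
      have claim : ∀ k : ℕ, ∃ ψ, ((0:ℝ) < ψ ∧ ψ ≤ 1/2) ∧ ∃ n : ℕ, ∀ m, n ≤ m →
          (k : ℝ) * (ε/2) ≤ (zn m (1/2) - f (1/2) + cn m * (1/2)) -
            (zn m ψ - f ψ + cn m * ψ) := by
        intro k
        induction k with
        | zero => exact ⟨1/2, ⟨by norm_num, le_refl _⟩, 0, fun m _ => by norm_num⟩
        | succ k ih =>
          obtain ⟨ψ, ⟨hψ0, hψhalf⟩, n, hn⟩ := ih
          have hψI : ψ ∈ Icc (0:ℝ) 1 := ⟨hψ0.le, by linarith⟩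
          have hjump : ε ≤ (zbar ψ - f ψ + c * ψ) - (zbar 0 - f 0 + c * 0) :=
            hcon ψ hψ0 hψhalf
          have htend : Tendsto
              (fun m => (zn m ψ - f ψ + cn m * ψ) - (zn m 0 - f 0 + cn m * 0))
              atTop (𝓝 ((zbar ψ - f ψ + c * ψ) - (zbar 0 - f 0 + c * 0))) :=
            (hGpt ψ hψI).sub (hGpt 0 h0I)
          have hev : ∀ᶠ m in atTop, (3/4)*ε <
              (zn m ψ - f ψ + cn m * ψ) - (zn m 0 - f 0 + cn m * 0) :=
            htend.eventually (eventually_gt_nhds (by linarith))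
          obtain ⟨N0, hN0⟩ := eventually_atTop.mp hev
          set n' : ℕ := max N0 n with hn'def
          have hcwa := (contG hf' (hzn n')) 0 h0I
          rw [Metric.continuousWithinAt_iff] at hcwa
          obtain ⟨δ', hδ'0, hδ'⟩ := hcwa (ε/4) (by positivity)
          set ψ' : ℝ := min (ψ/2) (δ'/2) with hψ'def
          have hψ'0 : 0 < ψ' := lt_min (by linarith) (by linarith)
          have hψ'ψ : ψ' < ψ := lt_of_le_of_lt (min_le_left _ _) (by linarith)
          have hψ'I : ψ' ∈ Icc (0:ℝ) 1 := by
            constructor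
            · exact hψ'0.le
            · have : ψ' ≤ ψ/2 := min_le_left _ _
              linarith
          have hd : dist ψ' 0 < δ' := by
            rw [Real.dist_eq, sub_zero, abs_of_pos hψ'0]
            exact lt_of_le_of_lt (min_le_right _ _) (by linarith)
          have hsmall := hδ' hψ'I hd
          rw [Real.dist_eq] at hsmall
          refine ⟨ψ', ⟨hψ'0, by linarith⟩, n', fun m hm => ?_⟩
          have hm2 : n ≤ m := le_trans (le_max_right _ _) hm
          have hbign' := hN0 n' (le_max_left _ _)
          rw [abs_lt] at hsmall
          have hstep : ε/2 ≤ (zn m ψ - f ψ + cn m * ψ) - (zn m ψ' - f ψ' + cn m * ψ') := by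
            have hkey := hGincr n' m hm ψ' hψ'I ψ hψI hψ'ψ.le
            have e0 : cn n' * (0:ℝ) = 0 := mul_zero _
            linarith
          have hprev := hn m hm2
          push_cast
          linarith
      obtain ⟨k, hk⟩ := exists_nat_gt (B / (ε/2))
      have hkB : B < k * (ε/2) := by
        rw [div_lt_iff₀ (by positivity)] at hk
        linarith
      obtain ⟨ψ, ⟨hψ0, hψh⟩, n, hn⟩ := claim k
      have hfin := hn n (le_refl n)
      have hψI : ψ ∈ Icc (0:ℝ) 1 := ⟨hψ0.le, by linarith⟩
      have hmono0 := hmn n h0I hψI hψ0.le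
      have hmono1 := hmn n hhalfI h1I (by norm_num)
      simp only at hmono0 hmono1
      have hv1 := hvI n 1 h1I
      have hz00 : zn 0 0 ≤ zn n 0 := hm 0 (Nat.zero_le n)
      have hcnC : cn n ≤ C := hC (mem_range_self n)
      have e0 : cn n * (0:ℝ) = 0 := mul_zero _
      have e1 : cn n * (1:ℝ) = cn n := mul_one _
      rw [hBdef] at hkB
      linarith
    -- continuity of zbar
    have hcont : ContinuousOn zbar (Icc (0:ℝ) 1) := by
      intro x hx
      rcases eq_or_lt_of_le hx.1 with h0 | h0
      · -- x = 0
        rw [← h0]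
        apply cwa_of_G (c := c) h0I (hfc 0 h0I)
        intro ε hε
        obtain ⟨ψ, hψ0, hψh, hψε⟩ := hump ε hε
        refine ⟨ψ, hψ0, ?_⟩
        intro y hy hyd
        rw [sub_zero] at hyd
        have hyψ : y ≤ ψ := by
          rw [abs_lt] at hyd
          linarith
        have hψI : ψ ∈ Icc (0:ℝ) 1 := ⟨hψ0.le, by linarith⟩
        have hup := hGbmono y hy ψ hψI hyψ
        have hlo := hGbmono 0 h0I y hy hy.1
        rw [abs_lt]
        constructor <;> linarith
      · rcases eq_or_lt_of_le hx.2 with h1 | h1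
        · -- x = 1
          rw [h1]
          apply cwa_of_G (c := c) h1I (hfc 1 h1I)
          intro ε hε
          have hev1 := (Metric.tendsto_nhds.mp (hGpt 1 h1I)) (ε/4) (by positivity)
          have hev2 := (Metric.tendsto_nhds.mp hcn) (ε/4) (by positivity)
          obtain ⟨n, hn1, hn2⟩ := (hev1.and hev2).exists
          have hcwa := (contG hf' (hzn n)) 1 h1I
          rw [Metric.continuousWithinAt_iff] at hcwa
          obtain ⟨δ', hδ'0, hδ'⟩ := hcwa (ε/4) (by positivity)
          refine ⟨δ', hδ'0, ?_⟩
          intro y hy hyd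
          have hup := hGbmono y hy 1 h1I hy.2
          have hGn1 : |(zn n 1 - f 1 + cn n * 1) - (zbar 1 - f 1 + c * 1)| < ε/4 := by
            rw [← Real.dist_eq]; exact hn1
          have hccn : |c - cn n| < ε/4 := by
            rw [← Real.dist_eq, dist_comm]; exact hn2
          have hGny : |(zn n y - f y + cn n * y) - (zn n 1 - f 1 + cn n * 1)| < ε/4 := by
            have := hδ' hy (by rw [Real.dist_eq]; exact hyd)
            rw [Real.dist_eq] at this
            exact this
          have hz : zn n y ≤ zbar y := le_ciSup (hbdd y hy) n
          have hy01 : |y| ≤ 1 := abs_le.mpr ⟨by linarith [hy.1], hy.2⟩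
          have hcy : |(c - cn n) * y| ≤ |c - cn n| := by
            rw [abs_mul]
            nlinarith [abs_nonneg (c - cn n)]
          have hcy' : -(ε/4) ≤ (c - cn n) * y := by
            have := neg_abs_le ((c - cn n) * y)
            linarith
          rw [abs_lt] at hGn1 hGny
          rw [abs_lt]
          constructor
          · -- lower bound on Gb y - Gb 1
            have hdecomp : (zbar y - f y + c * y) - (zbar 1 - f 1 + c * 1) =
                ((zbar y - zn n y) + (c - cn n) * y) +
                ((zn n y - f y + cn n * y) - (zn n 1 - f 1 + cn n * 1)) +
                ((zn n 1 - f 1 + cn n * 1) - (zbar 1 - f 1 + c * 1)) := by ring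
            rw [hdecomp]
            have : 0 ≤ zbar y - zn n y := by linarith
            linarith
          · linarith
        · -- interior
          exact cwa_interior hq_cont hq_pos hf' hzn hvcont
            (fun φ hφ => (hv 0 φ hφ).2) (fun n φ hφ => (hv n φ hφ).1) hpt hcn ⟨h0, h1⟩
    obtain ⟨hsol, hunif⟩ := core hq_cont hq_pos hf' hcn hzn hpt hcont hneg
    exact ⟨zbar, hsol, hunif⟩
  · -- DECREASING CASE
    have hwI : ∀ n, ∀ φ ∈ Icc (0:ℝ) 1, w φ ≤ zn n φ :=
      fun n => le_on_Icc hwcont (hzn n).1 (fun φ hφ => hw n φ hφ)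
    have hbdd : ∀ φ ∈ Icc (0:ℝ) 1, BddBelow (range fun n => zn n φ) := by
      intro φ hφ
      exact ⟨w φ, by rintro _ ⟨n, rfl⟩; exact hwI n φ hφ⟩
    set zbar : ℝ → ℝ := fun φ => ⨅ n, zn n φ with hzbardef
    have hpt : ∀ x ∈ Icc (0:ℝ) 1, Tendsto (fun n => zn n x) atTop (𝓝 (zbar x)) :=
      fun x hx => tendsto_atTop_ciInf (hm x) (hbdd x hx)
    have hneg : ∀ φ ∈ Ioo (0:ℝ) 1, zbar φ < 0 := by
      intro φ hφ
      have : zbar φ ≤ zn 0 φ := ciInf_le (hbdd φ (Ioo_subset_Icc_self hφ)) 0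
      exact lt_of_le_of_lt this ((hzn 0).2.2 φ hφ)
    have hGpt : ∀ y ∈ Icc (0:ℝ) 1,
        Tendsto (fun n => zn n y - f y + cn n * y) atTop (𝓝 (zbar y - f y + c * y)) :=
      fun y hy => ((hpt y hy).sub tendsto_const_nhds).add (hcn.mul_const y)
    have hmn : ∀ n, MonotoneOn (fun t => zn n t - f t + cn n * t) (Icc (0:ℝ) 1) :=
      fun n => solG_mono hq_pos hf' (hzn n)
    have hsq : ∀ ψ ∈ Icc (0:ℝ) 1, ∀ φ ∈ Icc (0:ℝ) 1, ψ ≤ φ →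
        0 ≤ (zbar φ - f φ + c * φ) - (zbar ψ - f ψ + c * ψ) ∧
        (zbar φ - f φ + c * φ) - (zbar ψ - f ψ + c * ψ) ≤
          (zn 0 φ - f φ + cn 0 * φ) - (zn 0 ψ - f ψ + cn 0 * ψ) := by
      intro ψ hψ φ hφ hle
      have ht : Tendsto (fun m => (zn m φ - f φ + cn m * φ) - (zn m ψ - f ψ + cn m * ψ))
          atTop (𝓝 ((zbar φ - f φ + c * φ) - (zbar ψ - f ψ + c * ψ))) :=
        (hGpt φ hφ).sub (hGpt ψ hψ)
      constructor
      · refine ge_of_tendsto ht (Eventually.of_forall fun m => ?_)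
        have := hmn m hψ hφ hle
        simp only at this
        linarith
      · refine le_of_tendsto ht (Eventually.of_forall fun m => ?_)
        have hmono2 := diffG_mono hq_pos hf' (hzn m) (hzn 0)
          (fun t _ => hm t (Nat.zero_le m)) hψ hφ hle
        simp only at hmono2
        linarith
    have hcont : ContinuousOn zbar (Icc (0:ℝ) 1) := by
      intro x hx
      apply cwa_of_G (c := c) hx (hfc x hx)
      intro ε hε
      have hcwa := (contG hf' (hzn 0)) x hx
      rw [Metric.continuousWithinAt_iff] at hcwa
      obtain ⟨δ', hδ'0, hδ'⟩ := hcwa ε hε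
      refine ⟨δ', hδ'0, fun y hy hyd => ?_⟩
      have h0 := hδ' hy (by rw [Real.dist_eq]; exact hyd)
      rw [Real.dist_eq] at h0
      rcases le_total y x with hyx | hxy
      · obtain ⟨ha, hb⟩ := hsq y hy x hx hyx
        rw [abs_lt] at h0 ⊢
        constructor <;> linarith
      · obtain ⟨ha, hb⟩ := hsq x hx y hy hxy
        rw [abs_lt] at h0 ⊢
        constructor <;> linarith
    obtain ⟨hsol, hunif⟩ := core hq_cont hq_pos hf' hcn hzn hpt hcont hneg
    exact ⟨zbar, hsol, hunif⟩
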